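/- arXiv:2410.11662 — 3 statements merged into one kernel-verified Lean document; each statement's English description precedes it below -/
import Mathlib

section
/- Let X and Y be metric spaces, H a complex Hilbert space, g : X → Y a map, δ > 0, and R, W ≥ 0 such that d(g(x), g(x')) ≤ W whenever d(x,x') ≤ R. Let V : ℓ²(X;H) → ℓ²(Y;H) be a bounded operator whose entries satisfy V_{y,x} = 0 whenever d(g(x), y) ≥ δ, and let T be a bounded operator on ℓ²(X;H) with propagation at most R. Then V∘T∘V* has propagation at most W + 2δ; that is, (V∘T∘V*)_{y,y'} = 0 whenever d(y,y') > W + 2δ, where V* is the Hilbert-space adjoint of V (whose entries satisfy (V*)_{x,y} = (V_{y,x})*). -/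
/-- `ℓ²(X; H)`: square-summable functions from `X` to `H`. -/
noncomputable abbrev ellTwo (X : Type) (H : Type) [NormedAddCommGroup H] :=
  lp (fun _ : X => H) 2

/-- A bounded operator on `ℓ²(X;H)` has propagation at most `r` if its matrix entries
`T_{x,y} : v ↦ (T (δ_y v)) x` vanish whenever `dist x y > r`. -/
def HasPropagationAtMost {X : Type} [MetricSpace X] [DecidableEq X]
    {H : Type} [NormedAddCommGroup H] [InnerProductSpace ℂ H]
    (T : ellTwo X H →L[ℂ] ellTwo X H) (r : ℝ) : Prop :=
  ∀ x y : X, r < dist x y → ∀ v : H, T (lp.single 2 y v) x = 0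

/-- Evaluation at a point as a continuous linear map on `ℓ²`. -/
noncomputable def evalCLM {Y : Type} {H : Type} [NormedAddCommGroup H]
    [InnerProductSpace ℂ H] (y : Y) : ellTwo Y H →L[ℂ] H :=
  LinearMap.mkContinuous
    { toFun := fun f => f y
      map_add' := fun f g => by simp [lp.coeFn_add]
      map_smul' := fun c f => by simp [lp.coeFn_smul] }
    1
    (fun f => by
      show ‖f y‖ ≤ 1 * ‖f‖; simpa using lp.norm_apply_le_norm (by norm_num : (2 : ENNReal) ≠ 0) f y)

@[simp] lemma evalCLM_apply {Y : Type} {H : Type} [NormedAddCommGroup H]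
    [InnerProductSpace ℂ H] (y : Y) (f : ellTwo Y H) : evalCLM y f = f y := rfl

/-- If `F` is supported in `S` and the entries `A_{y,x}` vanish for all `x ∈ S`, then
`(A F) y = 0`. -/
lemma vanish {X Y : Type} [DecidableEq X] {H : Type} [NormedAddCommGroup H]
    [InnerProductSpace ℂ H]
    (A : ellTwo X H →L[ℂ] ellTwo Y H) (S : Set X) (y : Y)
    (hA : ∀ x ∈ S, ∀ v : H, A (lp.single 2 x v) y = 0)
    (F : ellTwo X H) (hF : ∀ x ∉ S, F x = 0) : A F y = 0 := by
  have h1 : HasSum (fun x : X => lp.single 2 x (F x)) F :=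
    lp.hasSum_single (by norm_num) F
  have h2 : HasSum (fun x : X => ((evalCLM y).comp A) (lp.single 2 x (F x)))
      (((evalCLM y).comp A) F) := ((evalCLM y).comp A).hasSum h1
  have h3 : (fun x : X => ((evalCLM y).comp A) (lp.single 2 x (F x))) = fun _ => 0 := by
    funext x
    by_cases hx : x ∈ S
    · simp [hA x hx (F x)]
    · have hz : (lp.single 2 x (F x) : ellTwo X H) = 0 := by
        rw [hF x hx]
        apply Subtype.ext
        funext j
        by_cases h : j = x
        · subst h
          simp only [lp.single_apply_self]
          exact (congrFun (lp.coeFn_zero (fun _ : X => H) 2) j).symm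
        · rw [lp.single_apply_ne _ _ _ h]
          exact (congrFun (lp.coeFn_zero (fun _ : X => H) 2) j).symm
      rw [hz]
      simp
  rw [h3] at h2
  simpa using h2.unique hasSum_zero

/-- If the entries of `V` are supported `δ`-close to the graph of `g`, the distortion of
`g` at scale `R` is at most `W`, and `T` has propagation at most `R`, then `V ∘ T ∘ V*`
has propagation at most `W + 2δ`. -/
theorem propagation_conjugation {X Y : Type} [MetricSpace X] [MetricSpace Y]
    [DecidableEq X] [DecidableEq Y]
    {H : Type} [NormedAddCommGroup H] [InnerProductSpace ℂ H] [CompleteSpace H]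
    (g : X → Y) (δ R W : ℝ) (hδ : 0 < δ) (hR : 0 ≤ R) (hW : 0 ≤ W)
    (hg : ∀ x x' : X, dist x x' ≤ R → dist (g x) (g x') ≤ W)
    (V : ellTwo X H →L[ℂ] ellTwo Y H)
    (hV : ∀ (x : X) (y : Y), δ ≤ dist (g x) y → ∀ v : H, V (lp.single 2 x v) y = 0)
    (T : ellTwo X H →L[ℂ] ellTwo X H) (hT : HasPropagationAtMost T R) :
    ∀ y y' : Y, W + 2 * δ < dist y y' → ∀ v : H,
      (V.comp (T.comp (ContinuousLinearMap.adjoint V))) (lp.single 2 y' v) y = 0 := by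
  intro y y' hd v
  set f : ellTwo X H := (ContinuousLinearMap.adjoint V) (lp.single 2 y' v) with hf
  -- f is supported in S' = {x | dist (g x) y' < δ}
  have hsupp : ∀ x : X, δ ≤ dist (g x) y' → f x = 0 := by
    intro x hx
    have key : (inner ℂ (f x) (f x) : ℂ) = 0 := by
      calc (inner ℂ (f x) (f x) : ℂ)
          = inner ℂ (lp.single 2 x (f x)) f := (lp.inner_single_left x (f x) f).symm
        _ = inner ℂ (V (lp.single 2 x (f x))) (lp.single 2 y' v) := by
            rw [hf]; exact ContinuousLinearMap.adjoint_inner_right V _ _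
        _ = inner ℂ ((V (lp.single 2 x (f x))) y') v := by rw [lp.inner_single_right]
        _ = 0 := by rw [hV x y' hx]; simp
    exact inner_self_eq_zero.mp key
  have hgoal : V (T f) y = 0 := by
    apply vanish (V.comp T) {x : X | dist (g x) y' < δ} y _ f
    · intro x hx
      have : δ ≤ dist (g x) y' := not_lt.mp hx
      exact hsupp x this
    · intro x hx w
      simp only [ContinuousLinearMap.comp_apply]
      apply vanish V {x' : X | dist x x' ≤ R} y _ (T (lp.single 2 x w))
      · intro x' hx'
        have h1 : R < dist x' x := by rw [dist_comm]; exact not_le.mp hx'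
        exact hT x' x h1 w
      · intro x' hx' u
        apply hV
        have hx'' : dist x x' ≤ R := hx'
        have h1 : dist (g x) (g x') ≤ W := hg x x' hx''
        have h2 : dist (g x) y' < δ := hx
        have h3 : dist y y' ≤ dist y (g x') + dist (g x') (g x) + dist (g x) y' :=
          dist_triangle4 y (g x') (g x) y'
        have h4 : dist (g x') (g x) = dist (g x) (g x') := dist_comm _ _
        have h5 : dist (g x') y = dist y (g x') := dist_comm _ _
        linarith
  simpa only [ContinuousLinearMap.comp_apply] using hgoal
end

section
/- Let X and Y be nonempty locally finite metric spaces that are coarsely equivalent, and let H be an infinite-dimensional separable complex Hilbert space. Then there exists a unitary operator U : ℓ²(X;H) → ℓ²(Y;H) such that the map T ↦ U∘T∘U* restricts to a *-isomorphism from the Roe algebra C*(X) onto the Roe algebra C*(Y); in particular, C*(X) and C*(Y) are *-isomorphic. -/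
/-- All matrix entries of `T` are compact operators on `H`. -/
def HasCompactEntries {X : Type} [MetricSpace X] [DecidableEq X]
    {H : Type} [NormedAddCommGroup H] [InnerProductSpace ℂ H]
    (T : ellTwo X H →L[ℂ] ellTwo X H) : Prop :=
  ∀ x y : X, IsCompactOperator (fun v : H => T (lp.single 2 y v) x)

/-- The Roe algebra `C*(X)`: the norm closure of the set of operators having finite
propagation and compact entries. -/
def RoeAlgebra (X : Type) [MetricSpace X] [DecidableEq X]
    (H : Type) [NormedAddCommGroup H] [InnerProductSpace ℂ H] :
    Set (ellTwo X H →L[ℂ] ellTwo X H) :=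
  closure {T | (∃ r > (0 : ℝ), HasPropagationAtMost T r) ∧ HasCompactEntries T}

/-- A coarse map between metric spaces. -/
def CoarseMap {X Y : Type} [MetricSpace X] [MetricSpace Y] (g : X → Y) : Prop :=
  (∀ B : Set Y, Bornology.IsBounded B → Bornology.IsBounded (g ⁻¹' B)) ∧
  (∀ R > (0 : ℝ), ∃ S > (0 : ℝ), ∀ x x' : X, dist x x' ≤ R → dist (g x) (g x') ≤ S)

/-- `X` and `Y` are coarsely equivalent. -/
def CoarselyEquivalent (X Y : Type) [MetricSpace X] [MetricSpace Y] : Prop :=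
  ∃ (g : X → Y) (h : Y → X) (c : ℝ), 0 < c ∧ CoarseMap g ∧ CoarseMap h ∧
    (∀ x : X, dist (h (g x)) x ≤ c) ∧ (∀ y : Y, dist (g (h y)) y ≤ c)

/-! ### Auxiliary material -/

set_option linter.unusedSectionVars false

open scoped ENNReal

section lpAux

variable {H : Type} [NormedAddCommGroup H] [InnerProductSpace ℂ H]

theorem lp_single_add' {X : Type} [DecidableEq X] (x : X) (v w : H) :
    lp.single (E := fun _ : X => H) 2 x (v + w) = lp.single 2 x v + lp.single 2 x w := by
  apply lp.ext
  funext j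
  rw [lp.coeFn_add, Pi.add_apply]
  by_cases h : j = x
  · subst h; simp [lp.single_apply_self]
  · simp [lp.single_apply_ne _ _ _ h]

/-- `lp.single` as a continuous linear map. -/
noncomputable def lpSingleCLM (X : Type) [DecidableEq X] (x : X) : H →L[ℂ] ellTwo X H :=
  LinearMap.mkContinuous
    { toFun := fun v => lp.single 2 x v
      map_add' := fun v w => lp_single_add' x v w
      map_smul' := fun c v => by simp [lp.single_smul (E := fun _ : X => H) 2 x c v] }
    1 (fun v => by
      rw [one_mul]
      exact le_of_eq (lp.norm_single (E := fun _ : X => H) (by norm_num) x v))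

@[simp] theorem lpSingleCLM_apply (X : Type) [DecidableEq X] (x : X) (v : H) :
    lpSingleCLM X x v = lp.single 2 x v := rfl

/-- Evaluation at a point as a continuous linear map. -/
noncomputable def lpEvalCLM (X : Type) (x : X) : ellTwo X H →L[ℂ] H :=
  LinearMap.mkContinuous
    { toFun := fun f => f x
      map_add' := fun f g => congrFun (lp.coeFn_add f g) x
      map_smul' := fun c f => congrFun (lp.coeFn_smul c f) x }
    1 (fun f => by rw [one_mul]; exact lp.norm_apply_le_norm (by norm_num) f x)

@[simp] theorem lpEvalCLM_apply (X : Type) (x : X) (f : ellTwo X H) :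
    lpEvalCLM X x f = f x := rfl

theorem eq_sum_single_of_support {X : Type} [DecidableEq X] (f : ellTwo X H) (s : Finset X)
    (hs : ∀ x, x ∉ s → f x = 0) : f = ∑ x ∈ s, lp.single 2 x (f x) := by
  apply lp.ext
  funext j
  simp only [lp.coeFn_sum, Finset.sum_apply, lp.single_apply, Finset.sum_dite_eq]
  by_cases h : j ∈ s
  · simp [h]
  · simp [h, hs j h]

theorem isCompactOperator_finset_sum {γ : Type} (s : Finset γ) (f : γ → H → H)
    (hf : ∀ i ∈ s, IsCompactOperator (f i)) :
    IsCompactOperator (fun v => ∑ i ∈ s, f i v) := by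
  classical
  revert hf
  refine Finset.induction_on s ?_ ?_
  · intro _
    simp only [Finset.sum_empty]
    exact isCompactOperator_zero
  · intro a t ha ih hf
    have h1 : IsCompactOperator (f a) := hf a (Finset.mem_insert_self a t)
    have h2 : IsCompactOperator (fun v => ∑ i ∈ t, f i v) :=
      ih (fun i hi => hf i (Finset.mem_insert_of_mem hi))
    have h3 : (fun v => ∑ i ∈ insert a t, f i v) = (fun v => f a v + ∑ i ∈ t, f i v) := by
      funext v; rw [Finset.sum_insert ha]
    rw [h3]
    exact h1.add h2

end lpAux

section basisAux

variable {H : Type} [NormedAddCommGroup H] [InnerProductSpace ℂ H] [CompleteSpace H]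
variable {ι : Type}

/-- A separable infinite-dimensional Hilbert space has a countably infinite Hilbert basis. -/
theorem exists_countable_infinite_hilbertBasis
    [TopologicalSpace.SeparableSpace H] (hinf : ¬ FiniteDimensional ℂ H) :
    ∃ (w : Set H) (_ : HilbertBasis w ℂ H), Countable w ∧ Infinite w := by
  obtain ⟨w, b, hb⟩ := exists_hilbertBasis ℂ H
  have horth : Orthonormal ℂ ((↑) : w → H) := hb ▸ b.orthonormal
  have hsep : ∀ a a' : w, a ≠ a' → (1:ℝ) ≤ dist (a : H) (a' : H) := by
    intro a a' hne
    have h1 : ‖(a:H)‖ = 1 := horth.1 a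
    have h2 : ‖(a':H)‖ = 1 := horth.1 a'
    have h3 : (inner ℂ (a:H) (a':H) : ℂ) = 0 := horth.2 hne
    have h4 : ‖(a:H) - (a':H)‖^2 = ‖(a:H)‖^2 - 2 * Complex.re (inner ℂ (a:H) (a':H)) + ‖(a':H)‖^2 :=
      @norm_sub_sq ℂ _ _ _ _ _ _
    rw [h1, h2, h3] at h4
    simp only [Complex.zero_re, mul_zero, one_pow] at h4
    rw [dist_eq_norm]
    nlinarith [norm_nonneg ((a:H) - (a':H))]
  have hcw : Countable w := by
    obtain ⟨s, hsc, hsd⟩ := TopologicalSpace.exists_countable_dense H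
    have hex : ∀ a : w, ∃ z : H, z ∈ s ∧ dist (a:H) z < 1/2 := fun a =>
      hsd.exists_dist_lt (a:H) (by norm_num : (0:ℝ) < 1/2)
    choose fz hfz hfd using hex
    have : Countable s := hsc.to_subtype
    have hinj : Function.Injective (fun a : w => (⟨fz a, hfz a⟩ : s)) := by
      intro a a' hEq
      by_contra hne
      have h1 := hsep a a' hne
      have heq : fz a = fz a' := congrArg Subtype.val hEq
      have hlt : dist (a:H) (a':H) < 1 := by
        calc dist (a:H) (a':H) ≤ dist (a:H) (fz a) + dist (fz a) (a':H) := dist_triangle _ _ _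
          _ < 1/2 + 1/2 := by
              refine add_lt_add (hfd a) ?_
              rw [heq, dist_comm]
              exact hfd a'
          _ = 1 := by norm_num
      linarith
    exact hinj.countable
  have hiw : Infinite w := by
    rw [Set.infinite_coe_iff]
    intro hwfin
    apply hinf
    have hspan : Submodule.span ℂ w = ⊤ := by
      have hd := b.dense_span
      rw [hb, Subtype.range_coe] at hd
      have hcl : IsClosed ((Submodule.span ℂ w : Submodule ℂ H) : Set H) := by
        have : FiniteDimensional ℂ (Submodule.span ℂ w) := FiniteDimensional.span_of_finite ℂ hwfin
        exact Submodule.closed_of_finiteDimensional _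
      rwa [hcl.submodule_topologicalClosure_eq] at hd
    have : FiniteDimensional ℂ (⊤ : Submodule ℂ H) := by
      rw [← hspan]; exact FiniteDimensional.span_of_finite ℂ hwfin
    exact (Submodule.topEquiv (R := ℂ) (M := H)).finiteDimensional
  exact ⟨w, b, hcw, hiw⟩

/-- The standard orthonormal family of `ℓ²(X;H)` coming from a Hilbert basis of `H`. -/
noncomputable def bFam (X : Type) [DecidableEq X] (e : HilbertBasis ι ℂ H) :
    X × ι → ellTwo X H := fun j => lp.single 2 j.1 (e j.2)

theorem orthonormal_bFam (X : Type) [DecidableEq X] (e : HilbertBasis ι ℂ H) :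
    Orthonormal ℂ (bFam X e) := by
  classical
  rw [orthonormal_iff_ite]
  rintro ⟨x, n⟩ ⟨x', m⟩
  rw [bFam, bFam, lp.inner_single_left]
  by_cases h : x = x'
  · subst h
    rw [lp.single_apply_self]
    have he := e.orthonormal
    rw [orthonormal_iff_ite] at he
    rw [he n m]
    simp [Prod.ext_iff]
  · rw [lp.single_apply_ne _ _ _ h]
    simp [Prod.ext_iff, h]

theorem dense_bFam (X : Type) [DecidableEq X] (e : HilbertBasis ι ℂ H) :
    ⊤ ≤ (Submodule.span ℂ (Set.range (bFam X e))).topologicalClosure := by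
  intro f _
  set Sp := (Submodule.span ℂ (Set.range (bFam X e))).topologicalClosure with hSp
  have hsingle : ∀ (x : X) (v : H), lp.single 2 x v ∈ Sp := by
    intro x v
    have hv : v ∈ closure ((Submodule.span ℂ (Set.range ⇑e) : Submodule ℂ H) : Set H) := by
      have hd := e.dense_span
      rw [SetLike.ext'_iff, Submodule.topologicalClosure_coe] at hd
      rw [hd]; trivial
    have himg := (image_closure_subset_closure_image (lpSingleCLM X x).continuous)
        (Set.mem_image_of_mem _ hv)
    have hsub : ⇑(lpSingleCLM (H := H) X x) ''
          ((Submodule.span ℂ (Set.range ⇑e) : Submodule ℂ H) : Set H)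
        ⊆ ((Submodule.span ℂ (Set.range (bFam X e))) : Set (ellTwo X H)) := by
      rintro u ⟨z, hz, rfl⟩
      have hmem : (lpSingleCLM (H := H) X x) z ∈
          Submodule.map ((lpSingleCLM (H := H) X x) : H →ₗ[ℂ] ellTwo X H)
            (Submodule.span ℂ (Set.range ⇑e)) := Submodule.mem_map_of_mem hz
      rw [Submodule.map_span] at hmem
      refine Submodule.span_mono ?_ hmem
      rintro _ ⟨_, ⟨n, rfl⟩, rfl⟩
      exact ⟨(x, n), rfl⟩
    have := closure_mono hsub himg
    rw [hSp, ← SetLike.mem_coe, Submodule.topologicalClosure_coe]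
    exact this
  have hhs : HasSum (fun x : X => lp.single 2 x (f x)) f := lp.hasSum_single (by norm_num) f
  have hcl : IsClosed (Sp : Set (ellTwo X H)) := Submodule.isClosed_topologicalClosure _
  refine hcl.mem_of_tendsto hhs (Filter.Eventually.of_forall ?_)
  intro s
  exact Submodule.sum_mem Sp (fun x _ => hsingle x (f x))

/-- The unitary `ℓ²(X;H) ≃ ℓ²(Y;H)` induced by a pairing `φ` of `X × ι` with `Y × ι`
compatible with a relation `cond`. -/
theorem exists_V (X Y : Type) [DecidableEq X] [DecidableEq Y] (e : HilbertBasis ι ℂ H)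
    (cond : X → Y → Prop) (φ : X × ι ≃ Y × ι)
    (hφ1 : ∀ x n, cond x ((φ (x, n)).1)) (hφ2 : ∀ y m, cond ((φ.symm (y, m)).1) y) :
    ∃ V : ellTwo X H ≃ₗᵢ[ℂ] ellTwo Y H,
      (∀ (x : X) (w : H) (y : Y), ¬ cond x y → V (lp.single 2 x w) y = 0) ∧
      (∀ (y : Y) (v : H) (x : X), ¬ cond x y → V.symm (lp.single 2 y v) x = 0) := by
  classical
  let bYb : HilbertBasis (Y × ι) ℂ (ellTwo Y H) :=
    HilbertBasis.mk (orthonormal_bFam Y e) (dense_bFam Y e)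
  have hbY : ⇑bYb = bFam Y e := HilbertBasis.coe_mk _ _
  have horth' : Orthonormal ℂ (bFam X e ∘ ⇑φ.symm) :=
    (orthonormal_bFam X e).comp ⇑φ.symm φ.symm.injective
  have hdense' : ⊤ ≤ (Submodule.span ℂ (Set.range (bFam X e ∘ ⇑φ.symm))).topologicalClosure := by
    rw [Function.Surjective.range_comp φ.symm.surjective]
    exact dense_bFam X e
  let bXb : HilbertBasis (Y × ι) ℂ (ellTwo X H) := HilbertBasis.mk horth' hdense'
  have hbX : ⇑bXb = bFam X e ∘ ⇑φ.symm := HilbertBasis.coe_mk _ _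
  let V : ellTwo X H ≃ₗᵢ[ℂ] ellTwo Y H := bXb.repr.trans bYb.repr.symm
  have key1 : ∀ j : Y × ι, V ((bFam X e ∘ ⇑φ.symm) j) = bFam Y e j := by
    intro j
    have h1 : V (bXb j) = bYb j := by
      show bYb.repr.symm (bXb.repr (bXb j)) = bYb j
      rw [bXb.repr_self, bYb.repr_symm_single]
    rw [hbX, hbY] at h1
    exact h1
  have key2 : ∀ j : Y × ι, V.symm (bFam Y e j) = (bFam X e ∘ ⇑φ.symm) j := by
    intro j
    rw [← key1 j, LinearIsometryEquiv.symm_apply_apply]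
  refine ⟨V, ?_, ?_⟩
  · intro x w y hxy
    have h0 : HasSum (fun n => e.repr w n • e n) w := e.hasSum_repr w
    have h1 : HasSum (fun n : ι => e.repr w n • lp.single 2 x (e n))
        ((lp.single 2 x w : ellTwo X H)) := by
      simpa [map_smul] using (lpSingleCLM (H := H) X x).hasSum h0
    let W : ellTwo X H →L[ℂ] H := (lpEvalCLM Y y).comp V.toLinearIsometry.toContinuousLinearMap
    have h2 := W.hasSum h1
    have hWval : W (lp.single 2 x w) = V (lp.single 2 x w) y := rfl
    have hterm : ∀ n : ι, W (e.repr w n • lp.single 2 x (e n)) = 0 := by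
      intro n
      rw [map_smul]
      have hV1 : V (lp.single 2 x (e n)) = bFam Y e (φ (x, n)) := by
        have := key1 (φ (x, n))
        rw [Function.comp_apply, Equiv.symm_apply_apply] at this
        exact this
      have hWv : W (lp.single 2 x (e n)) = V (lp.single 2 x (e n)) y := rfl
      rw [hWv, hV1]
      have hne : y ≠ (φ (x, n)).1 := by
        intro hEq
        exact hxy (hEq ▸ hφ1 x n)
      rw [show bFam Y e (φ (x, n)) = lp.single 2 (φ (x, n)).1 (e (φ (x, n)).2) from rfl]
      rw [lp.single_apply_ne _ _ _ hne, smul_zero]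
    have hzero : (fun n : ι => W (e.repr w n • lp.single 2 x (e n))) = fun _ => (0 : H) :=
      funext hterm
    rw [hzero, hWval] at h2
    exact h2.unique hasSum_zero
  · intro y v x hxy
    have h0 : HasSum (fun m => e.repr v m • e m) v := e.hasSum_repr v
    have h1 : HasSum (fun m : ι => e.repr v m • lp.single 2 y (e m))
        ((lp.single 2 y v : ellTwo Y H)) := by
      simpa [map_smul] using (lpSingleCLM (H := H) Y y).hasSum h0
    let W : ellTwo Y H →L[ℂ] H :=
      (lpEvalCLM X x).comp V.symm.toLinearIsometry.toContinuousLinearMap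
    have h2 := W.hasSum h1
    have hWval : W (lp.single 2 y v) = V.symm (lp.single 2 y v) x := rfl
    have hterm : ∀ m : ι, W (e.repr v m • lp.single 2 y (e m)) = 0 := by
      intro m
      rw [map_smul]
      have hV1 : V.symm (lp.single 2 y (e m)) = bFam X e (φ.symm (y, m)) := key2 (y, m)
      have hWv : W (lp.single 2 y (e m)) = V.symm (lp.single 2 y (e m)) x := rfl
      rw [hWv, hV1]
      have hne : x ≠ (φ.symm (y, m)).1 := by
        intro hEq
        exact hxy (hEq ▸ hφ2 y m)
      rw [show bFam X e (φ.symm (y, m)) = lp.single 2 (φ.symm (y, m)).1 (e (φ.symm (y, m)).2)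
        from rfl]
      rw [lp.single_apply_ne _ _ _ hne, smul_zero]
    have hzero : (fun m : ι => W (e.repr v m • lp.single 2 y (e m))) = fun _ => (0 : H) :=
      funext hterm
    rw [hzero, hWval] at h2
    exact h2.unique hasSum_zero

end basisAux

section condEquiv

theorem exists_cond_equiv (X Y : Type) [MetricSpace X] [MetricSpace Y]
    (hLFX : ∀ B : Set X, Bornology.IsBounded B → B.Finite)
    (hLFY : ∀ B : Set Y, Bornology.IsBounded B → B.Finite)
    (hce : CoarselyEquivalent X Y) (ι : Type) [Countable ι] [Infinite ι] :
    ∃ (cond : X → Y → Prop) (φ : X × ι ≃ Y × ι),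
      (∀ y, {x | cond x y}.Finite) ∧
      (∀ x, {y | cond x y}.Finite) ∧
      (∀ x n, cond x ((φ (x, n)).1)) ∧
      (∀ y m, cond ((φ.symm (y, m)).1) y) ∧
      (∀ r : ℝ, 0 < r → ∃ r' : ℝ, 0 < r' ∧
        ∀ x x' y y', cond x y → cond x' y' → dist x x' ≤ r → dist y y' ≤ r') ∧
      (∀ s : ℝ, 0 < s → ∃ s' : ℝ, 0 < s' ∧
        ∀ x x' y y', cond x y → cond x' y' → dist y y' ≤ s → dist x x' ≤ s') := by
  classical
  obtain ⟨g, h, c, hc, hg, hh, hhg, hgh⟩ := hce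
  set I := Set.range g with hI
  let p : X → I := fun x => ⟨g x, ⟨x, rfl⟩⟩
  let q : Y → I := fun y => if hy : y ∈ I then ⟨y, hy⟩ else ⟨g (h y), ⟨h y, rfl⟩⟩
  have hqdist : ∀ y, dist ((q y : Y)) y ≤ c := by
    intro y
    by_cases hy : y ∈ I
    · simp only [q, dif_pos hy, dist_self]; exact le_of_lt hc
    · simp only [q, dif_neg hy]; exact hgh y
  have hq_surj : ∀ i : I, q (i : Y) = i := by
    intro i
    have : (i : Y) ∈ I := i.2
    simp only [q, dif_pos this]
  set cond : X → Y → Prop := fun x y => p x = q y with hcond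
  have hcond_dist : ∀ x y, cond x y → dist (g x) y ≤ c := by
    intro x y hxy
    have : g x = (q y : Y) := congrArg Subtype.val hxy
    rw [this]; exact hqdist y
  have hfin1 : ∀ y, {x | cond x y}.Finite := by
    intro y
    refine hLFX _ ((hg.1 {(q y : Y)} (Bornology.isBounded_singleton)).subset ?_)
    intro x hx
    have : g x = (q y : Y) := congrArg Subtype.val hx
    simp [Set.mem_preimage, this]
  have hfin2 : ∀ x, {y | cond x y}.Finite := by
    intro x
    refine hLFY _ ((Metric.isBounded_closedBall (x := g x) (r := c)).subset ?_)
    intro y hy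
    have h1 : dist (g x) y ≤ c := hcond_dist x y hy
    simp [Metric.mem_closedBall, dist_comm] at h1 ⊢
    exact h1
  have hFne : ∀ i : I, ∃ x, p x = i := by
    rintro ⟨_, x, rfl⟩
    exact ⟨x, rfl⟩
  have hGne : ∀ i : I, ∃ y, q y = i := fun i => ⟨(i : Y), hq_surj i⟩
  have hFfin : ∀ i : I, (Set.Finite {x | p x = i}) := by
    intro i
    refine hLFX _ ((hg.1 {(i : Y)} (Bornology.isBounded_singleton)).subset ?_)
    intro x hx
    have : g x = (i : Y) := congrArg Subtype.val hx
    simp [Set.mem_preimage, this]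
  have hGfin : ∀ i : I, (Set.Finite {y | q y = i}) := by
    intro i
    refine hLFY _ ((Metric.isBounded_closedBall (x := (i : Y)) (r := c)).subset ?_)
    intro y hy
    have h1 : dist ((q y : Y)) y ≤ c := hqdist y
    rw [show q y = i from hy] at h1
    simp [Metric.mem_closedBall, dist_comm] at h1 ⊢
    exact h1
  haveI hFin1 : ∀ i : I, Finite {x // p x = i} := fun i => (hFfin i).to_subtype
  haveI hFin2 : ∀ i : I, Finite {y // q y = i} := fun i => (hGfin i).to_subtype
  haveI hNe1 : ∀ i : I, Nonempty {x // p x = i} := fun i => (hFne i).elim (fun x hx => ⟨⟨x, hx⟩⟩)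
  haveI hNe2 : ∀ i : I, Nonempty {y // q y = i} := fun i => (hGne i).elim (fun y hy => ⟨⟨y, hy⟩⟩)
  have fibEquiv : ∀ i : I, Nonempty (({x // p x = i} × ι) ≃ ({y // q y = i} × ι)) := by
    intro i
    exact nonempty_equiv_of_countable
  let fe : ∀ i : I, ({x // p x = i} × ι) ≃ ({y // q y = i} × ι) := fun i => (fibEquiv i).some
  let eX : X × ι ≃ Σ i : I, ({x // p x = i} × ι) :=
    (Equiv.prodCongr (Equiv.sigmaFiberEquiv p).symm (Equiv.refl ι)).trans
      (Equiv.sigmaProdDistrib _ _)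
  let eY : Y × ι ≃ Σ i : I, ({y // q y = i} × ι) :=
    (Equiv.prodCongr (Equiv.sigmaFiberEquiv q).symm (Equiv.refl ι)).trans
      (Equiv.sigmaProdDistrib _ _)
  have hX1 : ∀ z : X × ι, (eX z).1 = p z.1 := fun z => rfl
  have hY1 : ∀ z : Y × ι, (eY z).1 = q z.1 := fun z => rfl
  let φ : X × ι ≃ Y × ι := eX.trans ((Equiv.sigmaCongrRight fe).trans eY.symm)
  have hφ : ∀ z : X × ι, q ((φ z).1) = p z.1 := by
    intro z
    have h1 : φ z = eY.symm ((Equiv.sigmaCongrRight fe) (eX z)) := rfl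
    have h2 : ((Equiv.sigmaCongrRight fe) (eX z)).1 = p z.1 := hX1 z
    rw [← hY1 (φ z), h1, Equiv.apply_symm_apply, h2]
  refine ⟨cond, φ, hfin1, hfin2, ?_, ?_, ?_, ?_⟩
  · intro x n
    exact (hφ (x, n)).symm
  · intro y m
    have := hφ (φ.symm (y, m))
    rw [Equiv.apply_symm_apply] at this
    exact this.symm
  · intro r hr
    obtain ⟨S, hS, hSp⟩ := hg.2 r hr
    refine ⟨S + 2 * c, by linarith, ?_⟩
    intro x x' y y' hxy hx'y' hd
    have h1 : dist (g x) y ≤ c := hcond_dist x y hxy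
    have h2 : dist (g x') y' ≤ c := hcond_dist x' y' hx'y'
    have h3 : dist (g x) (g x') ≤ S := hSp x x' hd
    calc dist y y' ≤ dist y (g x) + dist (g x) y' := dist_triangle _ _ _
      _ ≤ dist y (g x) + (dist (g x) (g x') + dist (g x') y') := by
          linarith [dist_triangle (g x) (g x') y']
      _ ≤ c + (S + c) := by
          rw [dist_comm y (g x)]; linarith
      _ = S + 2 * c := by ring
  · intro s hs
    obtain ⟨S, hS, hSp⟩ := hh.2 (s + 2 * c) (by linarith)
    refine ⟨S + 2 * c, by linarith, ?_⟩
    intro x x' y y' hxy hx'y' hd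
    have h1 : dist (g x) y ≤ c := hcond_dist x y hxy
    have h2 : dist (g x') y' ≤ c := hcond_dist x' y' hx'y'
    have h3 : dist (g x) (g x') ≤ s + 2 * c := by
      calc dist (g x) (g x') ≤ dist (g x) y + dist y (g x') := dist_triangle _ _ _
        _ ≤ dist (g x) y + (dist y y' + dist y' (g x')) := by
            linarith [dist_triangle y y' (g x')]
        _ ≤ c + (s + c) := by rw [dist_comm y' (g x')]; linarith
        _ = s + 2 * c := by ring
    have h4 : dist (h (g x)) (h (g x')) ≤ S := hSp _ _ h3
    have h5 : dist (h (g x)) x ≤ c := hhg x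
    have h6 : dist (h (g x')) x' ≤ c := hhg x'
    calc dist x x' ≤ dist x (h (g x)) + dist (h (g x)) x' := dist_triangle _ _ _
      _ ≤ dist x (h (g x)) + (dist (h (g x)) (h (g x')) + dist (h (g x')) x') := by
          linarith [dist_triangle (h (g x)) (h (g x')) x']
      _ ≤ c + (S + c) := by rw [dist_comm x (h (g x))]; linarith
      _ = S + 2 * c := by ring

end condEquiv
section conj

variable {H : Type} [NormedAddCommGroup H] [InnerProductSpace ℂ H] [CompleteSpace H]

/-- Conjugation by a compatible unitary sends generators of the Roe algebra to generators. -/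
theorem conj_generator {A B : Type} [MetricSpace A] [MetricSpace B]
    [DecidableEq A] [DecidableEq B]
    (V : ellTwo A H ≃ₗᵢ[ℂ] ellTwo B H) (cond : A → B → Prop)
    (hfin : ∀ b, {a | cond a b}.Finite)
    (hV : ∀ (a : A) (w : H) (b : B), ¬ cond a b → V (lp.single 2 a w) b = 0)
    (hVsymm : ∀ (b : B) (v : H) (a : A), ¬ cond a b → V.symm (lp.single 2 b v) a = 0)
    (hgeom : ∀ r : ℝ, 0 < r → ∃ r' : ℝ, 0 < r' ∧
      ∀ a a' b b', cond a b → cond a' b' → dist a a' ≤ r → dist b b' ≤ r')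
    (T : ellTwo A H →L[ℂ] ellTwo A H)
    (hT : (∃ r > (0:ℝ), HasPropagationAtMost T r) ∧ HasCompactEntries T) :
    (∃ r > (0:ℝ), HasPropagationAtMost
      ((V.toLinearIsometry.toContinuousLinearMap).comp
        (T.comp (V.symm.toLinearIsometry.toContinuousLinearMap))) r) ∧
    HasCompactEntries
      ((V.toLinearIsometry.toContinuousLinearMap).comp
        (T.comp (V.symm.toLinearIsometry.toContinuousLinearMap))) := by
  classical
  set M := (V.toLinearIsometry.toContinuousLinearMap).comp
      (T.comp (V.symm.toLinearIsometry.toContinuousLinearMap)) with hM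
  -- the entry formula
  have hentry : ∀ (b b' : B) (v : H),
      M (lp.single 2 b' v) b
        = ∑ a' ∈ (hfin b').toFinset, ∑ a ∈ (hfin b).toFinset,
            V (lp.single 2 a ((T (lp.single 2 a' ((V.symm (lp.single 2 b' v)) a'))) a)) b := by
    intro b b' v
    set ξ : ellTwo A H := V.symm (lp.single 2 b' v) with hξdef
    have hξ : ξ = ∑ a' ∈ (hfin b').toFinset, lp.single 2 a' (ξ a') := by
      refine eq_sum_single_of_support ξ _ ?_
      intro a ha
      exact hVsymm b' v a (by simpa using ha)
    set Φ : ellTwo A H →L[ℂ] H :=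
      (lpEvalCLM B b).comp ((V.toLinearIsometry.toContinuousLinearMap).comp T) with hΦ
    have hMval : M (lp.single 2 b' v) b = Φ ξ := rfl
    have hkey : ∀ (a' : A) (u : H),
        Φ (lp.single 2 a' u)
          = ∑ a ∈ (hfin b).toFinset, V (lp.single 2 a ((T (lp.single 2 a' u)) a)) b := by
      intro a' u
      have hs : HasSum (fun a : A => lp.single 2 a ((T (lp.single 2 a' u)) a))
          (T (lp.single 2 a' u)) := lp.hasSum_single (by norm_num) _
      have h2 := ((lpEvalCLM B b).comp V.toLinearIsometry.toContinuousLinearMap).hasSum hs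
      have hval : ((lpEvalCLM B b).comp V.toLinearIsometry.toContinuousLinearMap)
          (T (lp.single 2 a' u)) = Φ (lp.single 2 a' u) := rfl
      rw [hval] at h2
      have hvan : ∀ a : A, a ∉ (hfin b).toFinset →
          ((lpEvalCLM B b).comp V.toLinearIsometry.toContinuousLinearMap)
            (lp.single 2 a ((T (lp.single 2 a' u)) a)) = 0 := by
        intro a ha
        exact hV a _ b (by simpa using ha)
      have h3 := hasSum_sum_of_ne_finset_zero (L := SummationFilter.unconditional A) hvan
      exact h2.unique h3
    calc M (lp.single 2 b' v) b = Φ ξ := hMval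
      _ = Φ (∑ a' ∈ (hfin b').toFinset, lp.single 2 a' (ξ a')) := by rw [← hξ]
      _ = ∑ a' ∈ (hfin b').toFinset, Φ (lp.single 2 a' (ξ a')) := map_sum Φ _ _
      _ = ∑ a' ∈ (hfin b').toFinset, ∑ a ∈ (hfin b).toFinset,
            V (lp.single 2 a ((T (lp.single 2 a' ((V.symm (lp.single 2 b' v)) a'))) a)) b :=
        Finset.sum_congr rfl (fun a' _ => hkey a' (ξ a'))
  constructor
  · -- propagation
    obtain ⟨r, hr, hprop⟩ := hT.1
    obtain ⟨r', hr', hgeo⟩ := hgeom r hr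
    refine ⟨r', hr', ?_⟩
    intro b b' hbb' v
    rw [hentry b b' v]
    refine Finset.sum_eq_zero ?_
    intro a' ha'
    refine Finset.sum_eq_zero ?_
    intro a ha
    have hcab : cond a b := by simpa using ha
    have hcab' : cond a' b' := by simpa using ha'
    have hfar : r < dist a a' := by
      by_contra hle
      push_neg at hle
      exact absurd (hgeo a a' b b' hcab hcab' hle) (not_le.mpr hbb')
    rw [hprop a a' hfar _]
    rw [show lp.single (E := fun _ : A => H) 2 a (0 : H) = 0 from map_zero (lpSingleCLM A a)]
    rw [map_zero]
    exact congrFun (lp.coeFn_zero _ _) b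
  · -- compact entries
    intro b b'
    have hfun : (fun v : H => M (lp.single 2 b' v) b)
        = fun v : H => ∑ a' ∈ (hfin b').toFinset, ∑ a ∈ (hfin b).toFinset,
            V (lp.single 2 a ((T (lp.single 2 a' ((V.symm (lp.single 2 b' v)) a'))) a)) b :=
      funext (fun v => hentry b b' v)
    rw [hfun]
    refine isCompactOperator_finset_sum _ _ ?_
    intro a' _
    refine isCompactOperator_finset_sum _ _ ?_
    intro a _
    have hmid : IsCompactOperator (fun u : H => (T (lp.single 2 a' u)) a) := hT.2 a a'
    let L1 : H →L[ℂ] H := (lpEvalCLM A a').comp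
      ((V.symm.toLinearIsometry.toContinuousLinearMap).comp (lpSingleCLM B b'))
    let L3 : H →L[ℂ] H := (lpEvalCLM B b).comp
      ((V.toLinearIsometry.toContinuousLinearMap).comp (lpSingleCLM A a))
    have hcomp : IsCompactOperator
        (⇑L3 ∘ ((fun u : H => (T (lp.single 2 a' u)) a) ∘ ⇑L1)) :=
      (hmid.comp_clm L1).clm_comp L3
    exact hcomp
end conj

section adj

theorem adjoint_toCLM {E F : Type} [NormedAddCommGroup E] [InnerProductSpace ℂ E] [CompleteSpace E]
    [NormedAddCommGroup F] [InnerProductSpace ℂ F] [CompleteSpace F] (V : E ≃ₗᵢ[ℂ] F) :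
    ContinuousLinearMap.adjoint (V.toLinearIsometry.toContinuousLinearMap)
      = V.symm.toLinearIsometry.toContinuousLinearMap := by
  symm
  rw [ContinuousLinearMap.eq_adjoint_iff]
  intro x y
  have h1 : (V.symm.toLinearIsometry.toContinuousLinearMap x) = V.symm x := rfl
  have h2 : (V.toLinearIsometry.toContinuousLinearMap y) = V y := rfl
  rw [h1, h2, ← V.inner_map_map (V.symm x) y, V.apply_symm_apply]

end adj

set_option maxHeartbeats 2000000 in
/-- If `X` and `Y` are coarsely equivalent nonempty locally finite metric spaces, then
their Roe algebras are `*`-isomorphic via conjugation by a unitary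
`U : ℓ²(X;H) → ℓ²(Y;H)`. -/
theorem roeAlgebra_iso_of_coarselyEquivalent
    (X Y : Type) [MetricSpace X] [MetricSpace Y] [DecidableEq X] [DecidableEq Y]
    [Nonempty X] [Nonempty Y]
    (hLFX : ∀ B : Set X, Bornology.IsBounded B → B.Finite)
    (hLFY : ∀ B : Set Y, Bornology.IsBounded B → B.Finite)
    (hce : CoarselyEquivalent X Y)
    (H : Type) [NormedAddCommGroup H] [InnerProductSpace ℂ H] [CompleteSpace H]
    [TopologicalSpace.SeparableSpace H] (hinf : ¬ FiniteDimensional ℂ H) :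
    ∃ U : ellTwo X H →L[ℂ] ellTwo Y H,
      -- `U` is a unitary
      (ContinuousLinearMap.adjoint U).comp U = ContinuousLinearMap.id ℂ (ellTwo X H) ∧
      U.comp (ContinuousLinearMap.adjoint U) = ContinuousLinearMap.id ℂ (ellTwo Y H) ∧
      -- conjugation by `U` maps `C*(X)` into `C*(Y)` ...
      (∀ T ∈ RoeAlgebra X H,
        U.comp (T.comp (ContinuousLinearMap.adjoint U)) ∈ RoeAlgebra Y H) ∧
      -- ... surjectively,
      (∀ S ∈ RoeAlgebra Y H, ∃ T ∈ RoeAlgebra X H,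
        U.comp (T.comp (ContinuousLinearMap.adjoint U)) = S) ∧
      -- and is a `*`-homomorphism on `C*(X)`: additive, ℂ-linear, multiplicative,
      -- star-preserving (all automatic from unitarity, stated on `C*(X)`).
      (∀ T S : ellTwo X H →L[ℂ] ellTwo X H, T ∈ RoeAlgebra X H → S ∈ RoeAlgebra X H →
        U.comp ((T + S).comp (ContinuousLinearMap.adjoint U)) =
          U.comp (T.comp (ContinuousLinearMap.adjoint U)) +
            U.comp (S.comp (ContinuousLinearMap.adjoint U))) ∧
      (∀ (c : ℂ) (T : ellTwo X H →L[ℂ] ellTwo X H), T ∈ RoeAlgebra X H →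
        U.comp ((c • T).comp (ContinuousLinearMap.adjoint U)) =
          c • U.comp (T.comp (ContinuousLinearMap.adjoint U))) ∧
      (∀ T S : ellTwo X H →L[ℂ] ellTwo X H, T ∈ RoeAlgebra X H → S ∈ RoeAlgebra X H →
        U.comp ((T.comp S).comp (ContinuousLinearMap.adjoint U)) =
          (U.comp (T.comp (ContinuousLinearMap.adjoint U))).comp
            (U.comp (S.comp (ContinuousLinearMap.adjoint U)))) ∧
      (∀ T : ellTwo X H →L[ℂ] ellTwo X H, T ∈ RoeAlgebra X H →
        U.comp ((ContinuousLinearMap.adjoint T).comp (ContinuousLinearMap.adjoint U)) =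
          ContinuousLinearMap.adjoint
            (U.comp (T.comp (ContinuousLinearMap.adjoint U)))) := by
  classical
  obtain ⟨w, e, hcw, hiw⟩ := exists_countable_infinite_hilbertBasis (H := H) hinf
  obtain ⟨cond, φ, hfin1, hfin2, hφ1, hφ2, hgeomF, hgeomB⟩ :=
    exists_cond_equiv X Y hLFX hLFY hce w
  obtain ⟨V, hV, hVsymm⟩ := exists_V X Y e cond φ hφ1 hφ2
  set U : ellTwo X H →L[ℂ] ellTwo Y H := V.toLinearIsometry.toContinuousLinearMap with hU
  set Us : ellTwo Y H →L[ℂ] ellTwo X H := V.symm.toLinearIsometry.toContinuousLinearMap with hUs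
  have hadj : ContinuousLinearMap.adjoint U = Us := adjoint_toCLM V
  have hadj' : ContinuousLinearMap.adjoint Us = U := by
    have := adjoint_toCLM V.symm
    rw [LinearIsometryEquiv.symm_symm] at this
    exact this
  have hUsU : Us.comp U = ContinuousLinearMap.id ℂ (ellTwo X H) := by
    apply ContinuousLinearMap.ext
    intro f
    exact V.symm_apply_apply f
  have hUUs : U.comp Us = ContinuousLinearMap.id ℂ (ellTwo Y H) := by
    apply ContinuousLinearMap.ext
    intro f
    exact V.apply_symm_apply f
  -- forward conjugation preserves generators
  have hmapsTo : Set.MapsTo (fun T => U.comp (T.comp Us))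
      {T : ellTwo X H →L[ℂ] ellTwo X H |
        (∃ r > (0:ℝ), HasPropagationAtMost T r) ∧ HasCompactEntries T}
      {S : ellTwo Y H →L[ℂ] ellTwo Y H |
        (∃ r > (0:ℝ), HasPropagationAtMost S r) ∧ HasCompactEntries S} := by
    intro T hT
    exact conj_generator V cond hfin1 hV hVsymm hgeomF T hT
  -- backward conjugation preserves generators
  have hmapsTo' : Set.MapsTo (fun S => Us.comp (S.comp U))
      {S : ellTwo Y H →L[ℂ] ellTwo Y H |
        (∃ r > (0:ℝ), HasPropagationAtMost S r) ∧ HasCompactEntries S}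
      {T : ellTwo X H →L[ℂ] ellTwo X H |
        (∃ r > (0:ℝ), HasPropagationAtMost T r) ∧ HasCompactEntries T} := by
    intro S hS
    have hV' : ∀ (y : Y) (v : H) (x : X), ¬ cond x y → V.symm (lp.single 2 y v) x = 0 :=
      fun y v x hc => hVsymm y v x hc
    have hVsymm' : ∀ (x : X) (w : H) (y : Y), ¬ cond x y →
        V.symm.symm (lp.single 2 x w) y = 0 := by
      intro x wv y hc
      rw [LinearIsometryEquiv.symm_symm]
      exact hV x wv y hc
    have hgeomB' : ∀ s : ℝ, 0 < s → ∃ s' : ℝ, 0 < s' ∧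
        ∀ (y y' : Y) (x x' : X), cond x y → cond x' y' → dist y y' ≤ s → dist x x' ≤ s' := by
      intro s hs
      obtain ⟨s', hs', hp⟩ := hgeomB s hs
      exact ⟨s', hs', fun y y' x x' h1 h2 h3 => hp x x' y y' h1 h2 h3⟩
    have := conj_generator V.symm (fun y x => cond x y) hfin2 hV'
      (fun x wv y hc => hVsymm' x wv y hc)
      (by
        intro s hs
        obtain ⟨s', hs', hp⟩ := hgeomB' s hs
        exact ⟨s', hs', fun y y' x x' h1 h2 h3 => hp y y' x x' h1 h2 h3⟩)
      S hS
    rw [LinearIsometryEquiv.symm_symm] at this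
    exact this
  -- continuity of conjugations
  have hcont : ∀ {E F : Type} [NormedAddCommGroup E] [InnerProductSpace ℂ E] [CompleteSpace E]
      [NormedAddCommGroup F] [InnerProductSpace ℂ F] [CompleteSpace F]
      (P : E →L[ℂ] F) (Q : F →L[ℂ] E),
      Continuous (fun T : E →L[ℂ] E => P.comp (T.comp Q)) := by
    intro E F _ _ _ _ _ _ P Q
    have hlip : LipschitzWith (‖P‖₊ * ‖Q‖₊) (fun T : E →L[ℂ] E => P.comp (T.comp Q)) := by
      apply LipschitzWith.of_dist_le_mul
      intro T S
      rw [dist_eq_norm, dist_eq_norm]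
      have h1 : P.comp (T.comp Q) - P.comp (S.comp Q) = P.comp ((T - S).comp Q) := by
        rw [ContinuousLinearMap.sub_comp, ContinuousLinearMap.comp_sub]
      rw [h1]
      calc ‖P.comp ((T - S).comp Q)‖ ≤ ‖P‖ * ‖(T - S).comp Q‖ :=
            ContinuousLinearMap.opNorm_comp_le _ _
        _ ≤ ‖P‖ * (‖T - S‖ * ‖Q‖) :=
            mul_le_mul_of_nonneg_left (ContinuousLinearMap.opNorm_comp_le _ _) (norm_nonneg _)
        _ = ↑(‖P‖₊ * ‖Q‖₊) * ‖T - S‖ := by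
            simp only [NNReal.coe_mul, coe_nnnorm]
            ring
    exact hlip.continuous
  refine ⟨U, ?_, ?_, ?_, ?_, ?_, ?_, ?_, ?_⟩
  · rw [hadj]; exact hUsU
  · rw [hadj]; exact hUUs
  · intro T hT
    rw [hadj]
    exact map_mem_closure (f := fun T => U.comp (T.comp Us)) (hcont U Us) hT hmapsTo
  · intro S hS
    have hS' : S ∈ closure {S : ellTwo Y H →L[ℂ] ellTwo Y H |
        (∃ r > (0:ℝ), HasPropagationAtMost S r) ∧ HasCompactEntries S} := hS
    have hmem' : (fun S => Us.comp (S.comp U)) S ∈ closure {T : ellTwo X H →L[ℂ] ellTwo X H |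
        (∃ r > (0:ℝ), HasPropagationAtMost T r) ∧ HasCompactEntries T} :=
      map_mem_closure (f := fun S => Us.comp (S.comp U)) (hcont Us U) hS' hmapsTo'
    refine ⟨Us.comp (S.comp U), hmem', ?_⟩
    rw [hadj]
    apply ContinuousLinearMap.ext
    intro ξ
    show V (V.symm (S (V (V.symm ξ)))) = S ξ
    rw [V.apply_symm_apply, V.apply_symm_apply]
  · intro T S _ _
    rw [hadj, ContinuousLinearMap.add_comp, ContinuousLinearMap.comp_add]
  · intro c T _
    rw [hadj, ContinuousLinearMap.smul_comp, ContinuousLinearMap.comp_smul]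
  · intro T S _ _
    rw [hadj]
    apply ContinuousLinearMap.ext
    intro ξ
    show V (T (S (V.symm ξ))) = V (T (V.symm (V (S (V.symm ξ)))))
    rw [V.symm_apply_apply]
  · intro T _
    rw [hadj, ContinuousLinearMap.adjoint_comp, ContinuousLinearMap.adjoint_comp, hadj, hadj',
      ContinuousLinearMap.comp_assoc]
end

section
/- Let X be a metric space, H an infinite-dimensional separable complex Hilbert space, and n a positive integer. Then there exists an isometry W on ℓ²(X; Hⁿ), where Hⁿ denotes the Hilbert space of n-tuples (Fin n → H), such that W has propagation 0 (its entries W_{x,y} : Hⁿ → Hⁿ vanish whenever x ≠ y) and W∘W* equals the orthogonal projection P acting fiberwise by P(v₁, v₂, …, vₙ) = (v₁, 0, …, 0); that is, (W∘W*)(f)(x) = (f(x)₁, 0, …, 0) for every f ∈ ℓ²(X; Hⁿ) and x ∈ X. (This expresses that the Roe algebra of X is quasi-stable.) -/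
/-- The Hilbert space `Hⁿ` of `n`-tuples, `PiLp 2 (Fin n → H)`, is complete. -/
instance piLp_fin_completeSpace {H : Type} [NormedAddCommGroup H] [CompleteSpace H]
    (n : ℕ) : CompleteSpace (PiLp 2 (fun _ : Fin n => H)) :=
  inferInstance

open Submodule
open scoped ENNReal


noncomputable def HilbertBasis.reindexEquiv {E : Type*} [NormedAddCommGroup E]
    [InnerProductSpace ℂ E] [CompleteSpace E] {ι ι' : Type*}
    (b : HilbertBasis ι ℂ E) (e : ι' ≃ ι) : HilbertBasis ι' ℂ E :=
  HilbertBasis.mk (b.orthonormal.comp e e.injective)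
    (by rw [Set.range_comp, Equiv.range_eq_univ, Set.image_univ]; exact b.dense_span.ge)

@[simp] lemma HilbertBasis.reindexEquiv_coe {E : Type*} [NormedAddCommGroup E]
    [InnerProductSpace ℂ E] [CompleteSpace E] {ι ι' : Type*}
    (b : HilbertBasis ι ℂ E) (e : ι' ≃ ι) : ⇑(b.reindexEquiv e) = ⇑b ∘ e :=
  HilbertBasis.coe_mk _ _

theorem exists_hilbertBasis_nat (E : Type*) [NormedAddCommGroup E] [InnerProductSpace ℂ E]
    [CompleteSpace E] [TopologicalSpace.SeparableSpace E] (hinf : ¬ FiniteDimensional ℂ E) :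
    Nonempty (HilbertBasis ℕ ℂ E) := by
  obtain ⟨w, b, hb⟩ := exists_hilbertBasis ℂ E
  have hon : Orthonormal ℂ (Subtype.val : w → E) := hb ▸ b.orthonormal
  have hdist : ∀ x y : w, x ≠ y → (1 : ℝ) ≤ dist (x : E) (y : E) := by
    intro x y hxy
    have h0 : (inner ℂ (x : E) (y : E) : ℂ) = 0 := hon.2 hxy
    have h2 : ‖(x : E) - (y : E)‖ ^ 2 = 2 := by
      rw [@norm_sub_sq ℂ, h0, hon.1 x, hon.1 y]
      norm_num
    have hnn : (0:ℝ) ≤ ‖(x : E) - (y : E)‖ := norm_nonneg _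
    rw [dist_eq_norm]
    nlinarith
  have hcount : Countable w := by
    have hpw : Pairwise (Function.onFun Disjoint fun x : w => Metric.ball (x : E) (1/2)) := by
      intro x y hxy
      apply Metric.ball_disjoint_ball
      have := hdist x y hxy
      linarith
    exact hpw.countable_of_isOpen_disjoint (fun _ => Metric.isOpen_ball)
      (fun x => ⟨x, by simp⟩)
  have hinfw : Infinite w := by
    rw [Set.infinite_coe_iff]
    intro hfin
    apply hinf
    have htop : (span ℂ w).topologicalClosure = ⊤ := by
      simpa [hb, Subtype.range_coe] using b.dense_span
    haveI : FiniteDimensional ℂ (span ℂ w) := FiniteDimensional.span_of_finite ℂ hfin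
    have hclosed : IsClosed ((span ℂ w) : Set E) := Submodule.closed_of_finiteDimensional _
    have hspan : span ℂ w = ⊤ := by
      rw [← htop, IsClosed.submodule_topologicalClosure_eq hclosed]
    haveI : FiniteDimensional ℂ (⊤ : Submodule ℂ E) := hspan ▸ inferInstance
    exact Module.Finite.equiv (Submodule.topEquiv)
  obtain ⟨d⟩ : Nonempty (Denumerable w) := nonempty_denumerable_iff.mpr ⟨hcount, hinfw⟩
  exact ⟨b.reindexEquiv (Denumerable.eqv w).symm⟩


theorem exists_isometryEquiv_pi (H : Type) [NormedAddCommGroup H] [InnerProductSpace ℂ H]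
    [CompleteSpace H] [TopologicalSpace.SeparableSpace H] (hinf : ¬ FiniteDimensional ℂ H)
    (n : ℕ) (hn : 0 < n) :
    Nonempty ((PiLp 2 (fun _ : Fin n => H)) ≃ₗᵢ[ℂ] H) := by
  obtain ⟨b⟩ := exists_hilbertBasis_nat H hinf
  classical
  let v : Fin n × ℕ → PiLp 2 (fun _ : Fin n => H) :=
    fun p => (WithLp.equiv 2 (Fin n → H)).symm (Pi.single p.1 (b p.2))
  have hvapp : ∀ (p : Fin n × ℕ) (j : Fin n), v p j = Pi.single (M := fun _ : Fin n => H) p.1 (b p.2) j :=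
    by intro p j; rfl
  have hinner : ∀ p q : Fin n × ℕ, (inner ℂ (v p) (v q) : ℂ) =
      if p.1 = q.1 then inner ℂ (b p.2) (b q.2) else 0 := by
    intro p q
    rw [PiLp.inner_apply]
    simp only [hvapp]
    by_cases h : p.1 = q.1
    · rw [if_pos h, Finset.sum_eq_single p.1]
      · rw [Pi.single_eq_same, ← h, Pi.single_eq_same]
      · intro j _ hj
        rw [Pi.single_eq_of_ne hj, inner_zero_left]
      · simp
    · rw [if_neg h]
      apply Finset.sum_eq_zero
      intro j _
      rcases eq_or_ne j p.1 with rfl | hj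
      · rw [Pi.single_eq_of_ne h, inner_zero_right]
      · rw [Pi.single_eq_of_ne hj, inner_zero_left]
  have hon : Orthonormal ℂ v := by
    rw [orthonormal_iff_ite]
    intro p q
    rw [hinner]
    rcases eq_or_ne p q with rfl | hpq
    · simp [orthonormal_iff_ite.mp b.orthonormal p.2 p.2, b.orthonormal.1 p.2]
    · by_cases h1 : p.1 = q.1
      · have h2 : p.2 ≠ q.2 := fun h2 => hpq (Prod.ext h1 h2)
        simp [h1, orthonormal_iff_ite.mp b.orthonormal p.2 q.2, h2, hpq]
      · simp [h1, hpq]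
  have hbbot : (Submodule.span ℂ (Set.range ⇑b))ᗮ = ⊥ :=
    Submodule.topologicalClosure_eq_top_iff.mp b.dense_span
  have hsp : (Submodule.span ℂ (Set.range v))ᗮ = ⊥ := by
    rw [Submodule.eq_bot_iff]
    intro x hx
    rw [Submodule.mem_orthogonal] at hx
    have hx' : ∀ p : Fin n × ℕ, (inner ℂ (v p) x : ℂ) = 0 := fun p =>
      hx _ (Submodule.subset_span ⟨p, rfl⟩)
    have hcoord : ∀ i : Fin n, x i = 0 := by
      intro i
      have hxi : ∀ k : ℕ, (inner ℂ (b k) (x i) : ℂ) = 0 := by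
        intro k
        have h := hx' (i, k)
        rw [PiLp.inner_apply] at h
        simp only [hvapp] at h
        rw [← h, Finset.sum_eq_single i]
        · rw [Pi.single_eq_same]
        · intro j _ hj
          rw [Pi.single_eq_of_ne hj, inner_zero_left]
        · simp
      have hmem : x i ∈ (Submodule.span ℂ (Set.range ⇑b))ᗮ := by
        rw [Submodule.mem_orthogonal]
        intro u hu
        induction hu using Submodule.span_induction with
        | mem u hu => obtain ⟨k, rfl⟩ := hu; exact hxi k
        | zero => simp
        | add u w _ _ h1 h2 => rw [inner_add_left, h1, h2, add_zero]
        | smul c u _ h1 => rw [inner_smul_left, h1, mul_zero]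
      rw [hbbot, Submodule.mem_bot] at hmem
      exact hmem
    exact PiLp.ext hcoord
  let b2 : HilbertBasis (Fin n × ℕ) ℂ (PiLp 2 (fun _ : Fin n => H)) :=
    HilbertBasis.mkOfOrthogonalEqBot hon hsp
  haveI : Nonempty (Fin n) := Fin.pos_iff_nonempty.mp hn
  obtain ⟨d⟩ : Nonempty (Denumerable (Fin n × ℕ)) :=
    nonempty_denumerable_iff.mpr ⟨inferInstance, inferInstance⟩
  let b' : HilbertBasis (Fin n × ℕ) ℂ H := b.reindexEquiv (Denumerable.eqv (Fin n × ℕ)).symm.symm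
  exact ⟨b2.repr.trans b'.repr.symm⟩

section lpComp

variable {X : Type} {E F : Type} [NormedAddCommGroup E] [NormedAddCommGroup F]
  [NormedSpace ℂ E] [NormedSpace ℂ F]

private lemma hp2 : (0:ℝ) < (2 : ℝ≥0∞).toReal := by norm_num

lemma memℓp_comp (T : E →L[ℂ] F) (hT : ∀ v, ‖T v‖ ≤ ‖v‖) (f : lp (fun _ : X => E) 2) :
    Memℓp (fun x => T (f x)) 2 := by
  apply memℓp_gen
  apply Summable.of_nonneg_of_le (fun x => by positivity)
    (fun x => Real.rpow_le_rpow (norm_nonneg _) (hT (f x)) hp2.le)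
  exact (lp.memℓp f).summable hp2

/-- Apply a norm-nonincreasing linear map fiberwise on `ℓ²(X; E)`. -/
noncomputable def lpCompL (T : E →L[ℂ] F) (hT : ∀ v, ‖T v‖ ≤ ‖v‖) :
    lp (fun _ : X => E) 2 →L[ℂ] lp (fun _ : X => F) 2 :=
  LinearMap.mkContinuous
    { toFun := fun f => (⟨fun x => T (f x), memℓp_comp T hT f⟩ : lp (fun _ : X => F) 2)
      map_add' := fun f g => by
        ext x
        simp [lp.coeFn_add]
        rfl
      map_smul' := fun c f => by
        ext x
        simp [lp.coeFn_smul] }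
    1
    (by
      intro f
      rw [one_mul]
      apply lp.norm_le_of_tsum_le hp2 (norm_nonneg f)
      have h1 : ∑' x, ‖T (f x)‖ ^ (2 : ℝ≥0∞).toReal ≤ ∑' x, ‖f x‖ ^ (2 : ℝ≥0∞).toReal := by
        apply Summable.tsum_le_tsum _ ((memℓp_comp T hT f).summable hp2) ((lp.memℓp f).summable hp2)
        exact fun x => Real.rpow_le_rpow (norm_nonneg _) (hT (f x)) hp2.le
      calc ∑' x, ‖(fun x => T (f x)) x‖ ^ (2 : ℝ≥0∞).toReal
          ≤ ∑' x, ‖f x‖ ^ (2 : ℝ≥0∞).toReal := h1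
        _ = ‖f‖ ^ (2 : ℝ≥0∞).toReal := (lp.norm_rpow_eq_tsum hp2 f).symm)

@[simp] lemma lpCompL_apply (T : E →L[ℂ] F) (hT : ∀ v, ‖T v‖ ≤ ‖v‖)
    (f : lp (fun _ : X => E) 2) (x : X) : lpCompL T hT f x = T (f x) := rfl

end lpComp


/-- Quasi-stability of the Roe algebra: for every `n ≥ 1` there is an isometry `W` on
`ℓ²(X; Hⁿ)` of propagation `0` with `W W*` equal to the fiberwise orthogonal projection
onto the first coordinate. -/
theorem roe_quasi_stable
    (X : Type) [MetricSpace X] [DecidableEq X]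
    (H : Type) [NormedAddCommGroup H] [InnerProductSpace ℂ H] [CompleteSpace H]
    [TopologicalSpace.SeparableSpace H] (hinf : ¬ FiniteDimensional ℂ H)
    (n : ℕ) (hn : 0 < n) :
    ∃ W : ellTwo X (PiLp 2 (fun _ : Fin n => H)) →L[ℂ]
        ellTwo X (PiLp 2 (fun _ : Fin n => H)),
      -- `W` is an isometry
      (ContinuousLinearMap.adjoint W).comp W =
        ContinuousLinearMap.id ℂ (ellTwo X (PiLp 2 (fun _ : Fin n => H))) ∧
      -- `W` has propagation `0`
      (∀ x y : X, x ≠ y → ∀ v : PiLp 2 (fun _ : Fin n => H),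
        W (lp.single 2 y v) x = 0) ∧
      -- `W W*` is the fiberwise projection onto the first coordinate
      (∀ (f : ellTwo X (PiLp 2 (fun _ : Fin n => H))) (x : X) (i : Fin n),
        (W.comp (ContinuousLinearMap.adjoint W)) f x i =
          if i = (⟨0, hn⟩ : Fin n) then f x (⟨0, hn⟩ : Fin n) else 0) := by
  classical
  obtain ⟨U⟩ := exists_isometryEquiv_pi H hinf n hn
  let J : PiLp 2 (fun _ : Fin n => H) →L[ℂ] PiLp 2 (fun _ : Fin n => H) :=
    LinearMap.mkContinuous
      { toFun := fun v => (WithLp.equiv 2 (Fin n → H)).symm (Pi.single ⟨0, hn⟩ (U v))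
        map_add' := fun v w => by simp [Pi.single_add]
        map_smul' := fun c v => by simp [Pi.single_smul] }
      1 (fun v => by simp)
  have hJapp : ∀ (v : PiLp 2 (fun _ : Fin n => H)) (i : Fin n),
      J v i = Pi.single (M := fun _ : Fin n => H) ⟨0, hn⟩ (U v) i := by
    intro v i; rfl
  have hJ : ∀ v, ‖J v‖ ≤ ‖v‖ := fun v => by
    show ‖(WithLp.equiv 2 (Fin n → H)).symm (Pi.single ⟨0, hn⟩ (U v))‖ ≤ ‖v‖
    simp
  let J' : PiLp 2 (fun _ : Fin n => H) →L[ℂ] PiLp 2 (fun _ : Fin n => H) :=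
    LinearMap.mkContinuous
      { toFun := fun v => U.symm (v ⟨0, hn⟩)
        map_add' := fun v w => by simp
        map_smul' := fun c v => by simp }
      1 (fun v => by
        have h5 : ‖v‖ ^ 2 = ∑ i, ‖v i‖ ^ 2 := by
          rw [norm_sq_eq_re_inner (𝕜 := ℂ), PiLp.inner_apply, map_sum]
          exact Finset.sum_congr rfl fun i _ => (norm_sq_eq_re_inner (𝕜 := ℂ) (v i)).symm
        have h3 : ‖v ⟨0, hn⟩‖ ^ 2 ≤ ∑ i, ‖v i‖ ^ 2 :=
          Finset.single_le_sum (f := fun i => ‖v i‖ ^ 2)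
            (fun i _ => by positivity) (Finset.mem_univ _)
        have h6 : ‖v ⟨0, hn⟩‖ ^ 2 ≤ ‖v‖ ^ 2 := h5 ▸ h3
        have h1 : ‖v ⟨0, hn⟩‖ ≤ ‖v‖ := by nlinarith [norm_nonneg v, norm_nonneg (v ⟨0, hn⟩)]
        rw [one_mul]
        show ‖U.symm (v ⟨0, hn⟩)‖ ≤ ‖v‖
        rw [LinearIsometryEquiv.norm_map]
        exact h1)
  have hJ' : ∀ v, ‖J' v‖ ≤ ‖v‖ := fun v => by
    simpa using J'.le_of_opNorm_le (LinearMap.mkContinuous_norm_le _ zero_le_one _) v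
  let W := lpCompL (X := X) J hJ
  let W' := lpCompL (X := X) J' hJ'
  -- pointwise inner product identities
  have hinnerJJ : ∀ v w : PiLp 2 (fun _ : Fin n => H),
      (inner ℂ (J v) (J w) : ℂ) = inner ℂ v w := by
    intro v w
    rw [PiLp.inner_apply]
    rw [Finset.sum_eq_single (⟨0, hn⟩ : Fin n)]
    · rw [hJapp, hJapp, Pi.single_eq_same, Pi.single_eq_same]
      exact U.inner_map_map v w
    · intro j _ hj
      rw [hJapp, Pi.single_eq_of_ne hj, inner_zero_left]
    · simp
  have hinnerJ'J : ∀ v w : PiLp 2 (fun _ : Fin n => H),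
      (inner ℂ (J' v) w : ℂ) = inner ℂ v (J w) := by
    intro v w
    have hL : (inner ℂ (J' v) w : ℂ) = inner ℂ (v ⟨0, hn⟩) (U w) := by
      show (inner ℂ (U.symm (v ⟨0, hn⟩)) w : ℂ) = _
      rw [← U.inner_map_map, U.apply_symm_apply]
    have hR : (inner ℂ v (J w) : ℂ) = inner ℂ (v ⟨0, hn⟩) (U w) := by
      rw [PiLp.inner_apply, Finset.sum_eq_single (⟨0, hn⟩ : Fin n)]
      · rw [hJapp, Pi.single_eq_same]
      · intro j _ hj
        rw [hJapp, Pi.single_eq_of_ne hj, inner_zero_right]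
      · simp
    rw [hL, hR]
  have hadj : ContinuousLinearMap.adjoint W = W' := by
    symm
    rw [ContinuousLinearMap.eq_adjoint_iff]
    intro f g
    rw [lp.inner_eq_tsum, lp.inner_eq_tsum]
    exact tsum_congr fun x => hinnerJ'J (f x) (g x)
  refine ⟨W, ?_, ?_, ?_⟩
  · refine ContinuousLinearMap.ext fun f => ?_
    apply ext_inner_right ℂ
    intro g
    rw [ContinuousLinearMap.comp_apply, ContinuousLinearMap.adjoint_inner_left]
    rw [lp.inner_eq_tsum]
    rw [ContinuousLinearMap.id_apply, lp.inner_eq_tsum]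
    exact tsum_congr fun x => hinnerJJ (f x) (g x)
  · intro x y hxy v
    have h0 := lpCompL_apply J hJ (lp.single 2 y v) x
    rw [show (W (lp.single 2 y v)) x = J ((lp.single 2 y v : lp (fun _ : X => PiLp 2 (fun _ : Fin n => H)) 2) x) from h0,
      lp.single_apply_ne (E := fun _ : X => PiLp 2 (fun _ : Fin n => H)) 2 y v hxy, map_zero]
  · intro f x i
    rw [ContinuousLinearMap.comp_apply, hadj]
    have h1 : W (W' f) x i = J (J' (f x)) i := rfl
    have h2 : U (J' (f x)) = f x ⟨0, hn⟩ := U.apply_symm_apply _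
    rw [h1, hJapp, h2, Pi.single_apply]
end
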